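/- Let μ₁, μ₂, ν₁, ν₂, D₁, D₂ be nonnegative real numbers with μ₁·D₁ + μ₂·D₂ > 0. Then there exist real numbers a ≥ 0 and b ≥ 0 satisfying μ₁·D₁ + ν₁·b ≤ a and μ₂·D₂ + ν₂·a ≤ b if and only if ν₁·ν₂ < 1. -/

import Mathlib

/-- Existence of a valid assume-guarantee contract for a two-subsystem
interconnection iff the small gain condition holds. -/
theorem valid_contract_iff_small_gain
    (μ₁ μ₂ ν₁ ν₂ D₁ D₂ : ℝ)
    (hμ₁ : 0 ≤ μ₁) (hμ₂ : 0 ≤ μ₂) (hν₁ : 0 ≤ ν₁) (hν₂ : 0 ≤ ν₂)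
    (hD₁ : 0 ≤ D₁) (hD₂ : 0 ≤ D₂)
    (hpos : 0 < μ₁ * D₁ + μ₂ * D₂) :
    (∃ a b : ℝ, 0 ≤ a ∧ 0 ≤ b ∧
      μ₁ * D₁ + ν₁ * b ≤ a ∧ μ₂ * D₂ + ν₂ * a ≤ b) ↔ ν₁ * ν₂ < 1 := by
  constructor
  · rintro ⟨a, b, ha, hb, h1, h2⟩
    by_contra h
    push_neg at h
    nlinarith [mul_le_mul_of_nonneg_left h2 hν₁, mul_le_mul_of_nonneg_left h1 hν₂,
      mul_nonneg hν₂ (mul_nonneg hμ₁ hD₁), mul_nonneg hν₁ (mul_nonneg hμ₂ hD₂),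
      mul_nonneg (by linarith : (0:ℝ) ≤ ν₁ * ν₂ - 1) (add_nonneg ha hb)]
  · intro h
    have hd : 0 < 1 - ν₁ * ν₂ := by linarith
    refine ⟨(μ₁ * D₁ + ν₁ * (μ₂ * D₂)) / (1 - ν₁ * ν₂),
      (μ₂ * D₂ + ν₂ * (μ₁ * D₁)) / (1 - ν₁ * ν₂), ?_, ?_, ?_, ?_⟩
    · positivity
    · positivity
    · apply le_of_eq
      field_simp
      ring
    · apply le_of_eq
      field_simp [show (1 - ν₂ * ν₁) ≠ 0 by rw [mul_comm]; exact hd.ne']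
      ring
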